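/- arXiv:2509.02733 — 3 statements merged into one kernel-verified Lean document; each statement's English description precedes it below -/
import Mathlib

section
/- For α > 0, λ > 0, and t > 0, the derivative with respect to t of E_{α,1}(-λ t^α) equals -λ t^{α-1} E_{α,α}(-λ t^α). -/
open Real Filter Set

/-- Gamma growth: `Γ(x+α) ≥ Γ(x) x^(min α 1) / 2` for `x ≥ 1`. -/
lemma gamma_growth {α x : ℝ} (hα : 0 < α) (hx : 1 ≤ x) :
    Real.Gamma x * x ^ min α 1 / 2 ≤ Real.Gamma (x + α) := by
  have hx0 : 0 < x := lt_of_lt_of_le one_pos hx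
  have hΓx : 0 < Real.Gamma x := Real.Gamma_pos_of_pos hx0
  rcases le_or_gt 1 α with h1 | h1
  · -- α ≥ 1 : Γ(x+α) ≥ Γ(x+1) = x Γ(x)
    have hmin : min α 1 = 1 := min_eq_right h1
    rw [hmin, Real.rpow_one]
    have hmono := Real.Gamma_strictMonoOn_Ici.monotoneOn
    have h2 : Real.Gamma (x + 1) ≤ Real.Gamma (x + α) := by
      apply hmono (by simp [mem_Ici]; linarith) (by simp [mem_Ici]; linarith) (by linarith)
    rw [Real.Gamma_add_one hx0.ne'] at h2
    nlinarith
  · -- α < 1 : log-convexity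
    have hmin : min α 1 = α := min_eq_left h1.le
    rw [hmin]
    have hxα : 0 < x + α := by linarith
    have hΓxα : 0 < Real.Gamma (x + α) := Real.Gamma_pos_of_pos hxα
    have hconv := Real.convexOn_log_Gamma.2 (mem_Ioi.mpr hxα)
      (mem_Ioi.mpr (by linarith : (0:ℝ) < x + α + 1)) (le_of_lt hα)
      (by linarith : (0:ℝ) ≤ 1 - α) (by ring)
    have hcomb : α • (x + α) + (1 - α) • (x + α + 1) = x + 1 := by
      simp [smul_eq_mul]; ring
    rw [hcomb] at hconv
    simp only [Function.comp_apply, smul_eq_mul] at hconv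
    -- hconv : log Γ(x+1) ≤ α log Γ(x+α) + (1-α) log Γ(x+α+1)
    have hΓrec : Real.Gamma (x + α + 1) = (x + α) * Real.Gamma (x + α) :=
      Real.Gamma_add_one hxα.ne'
    rw [hΓrec, Real.log_mul hxα.ne' hΓxα.ne'] at hconv
    have hlog : Real.log (Real.Gamma (x + 1)) ≤
        Real.log (Real.Gamma (x + α) * (x + α) ^ (1 - α)) := by
      rw [Real.log_mul hΓxα.ne' (Real.rpow_pos_of_pos hxα _).ne', Real.log_rpow hxα]
      linarith
    have hexp : Real.Gamma (x + 1) ≤ Real.Gamma (x + α) * (x + α) ^ (1 - α) :=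
      (Real.log_le_log_iff (Real.Gamma_pos_of_pos (by linarith))
        (by positivity)).mp hlog
    rw [Real.Gamma_add_one hx0.ne'] at hexp
    -- (x+α)^(1-α) ≤ 2 x^(1-α)
    have h2x : (x + α) ^ (1 - α) ≤ 2 * x ^ (1 - α) := by
      have : (x + α) ^ (1 - α) ≤ (2 * x) ^ (1 - α) :=
        Real.rpow_le_rpow hxα.le (by linarith) (by linarith)
      rw [Real.mul_rpow (by norm_num) hx0.le] at this
      have h21 : (2:ℝ) ^ (1 - α) ≤ 2 := by
        calc (2:ℝ) ^ (1 - α) ≤ 2 ^ (1:ℝ) :=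
          Real.rpow_le_rpow_of_exponent_le (by norm_num) (by linarith)
        _ = 2 := by norm_num
      nlinarith [Real.rpow_pos_of_pos hx0 (1 - α)]
    -- combine: x Γ(x) ≤ Γ(x+α) (x+α)^(1-α) ≤ 2 Γ(x+α) x^(1-α)
    have hxsplit : x ^ α * x ^ (1 - α) = x := by
      rw [← Real.rpow_add hx0]; norm_num
    have hpow : 0 < x ^ (1 - α) := Real.rpow_pos_of_pos hx0 _
    rw [div_le_iff₀ (by norm_num : (0:ℝ) < 2)]
    nlinarith [mul_le_mul_of_nonneg_left h2x hΓxα.le]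

/-- Summability of `(n+1) C^n / Γ(αn+1)`. -/
lemma ml_summable {α C : ℝ} (hα : 0 < α) (hC : 0 < C) :
    Summable (fun n : ℕ => ((n:ℝ) + 1) * C ^ n / Real.Gamma (α * n + 1)) := by
  set m := min α 1 with hm
  have hm0 : 0 < m := lt_min hα one_pos
  apply summable_of_ratio_norm_eventually_le (r := 1/2) (by norm_num)
  have htend : Tendsto (fun n : ℕ => (α * n + 1) ^ m) atTop atTop := by
    apply (tendsto_rpow_atTop hm0).comp
    apply tendsto_atTop_add_const_right
    exact (tendsto_natCast_atTop_atTop (R := ℝ)).const_mul_atTop hα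
  filter_upwards [htend.eventually_ge_atTop (8 * C)] with n h8
  set x := α * (n : ℝ) + 1 with hxdef
  have hx1 : 1 ≤ x := by
    have : (0:ℝ) ≤ α * n := by positivity
    simp [hxdef]; linarith
  have hx0 : 0 < x := lt_of_lt_of_le one_pos hx1
  have hΓx : 0 < Real.Gamma x := Real.Gamma_pos_of_pos hx0
  have hΓxα : 0 < Real.Gamma (x + α) := Real.Gamma_pos_of_pos (by linarith)
  have hG := gamma_growth hα hx1
  have hxm : 0 < x ^ m := Real.rpow_pos_of_pos hx0 _
  have hkey : α * ((n : ℝ) + 1) + 1 = x + α := by rw [hxdef]; ring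
  have hCn : 0 < C ^ n := pow_pos hC n
  rw [Real.norm_eq_abs, Real.norm_eq_abs, abs_of_pos (by push_cast [hkey]; positivity),
    abs_of_pos (by positivity)]
  push_cast [hkey]
  have hA : 4 * C * Real.Gamma x ≤ Real.Gamma (x + α) := by
    nlinarith [mul_le_mul_of_nonneg_left h8 hΓx.le]
  have hB : ((n:ℝ) + 1 + 1) * C ^ (n + 1) / Real.Gamma (x + α)
      ≤ ((n:ℝ) + 1 + 1) * C ^ (n + 1) / (4 * C * Real.Gamma x) := by
    gcongr
  refine hB.trans ?_
  have hRHS : (1:ℝ)/2 * (((n:ℝ) + 1) * C ^ n / Real.Gamma x)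
      = ((n:ℝ) + 1) * C ^ n / (2 * Real.Gamma x) := by ring
  rw [hRHS, div_le_div_iff₀ (by positivity) (by positivity), pow_succ]
  have hpos : (0:ℝ) ≤ C ^ n * C * Real.Gamma x :=
    le_of_lt (by positivity)
  nlinarith [Nat.cast_nonneg (α := ℝ) n]

/-- The real Mittag-Leffler function `E_{α,β}(x) = ∑ x^n / Γ(αn + β)`. -/
noncomputable def mittagLeffler (α β x : ℝ) : ℝ :=
  ∑' n : ℕ, x ^ n / Real.Gamma (α * n + β)

/-- For `α > 0`, `λ > 0`, `t > 0`:
`d/dt [E_{α,1}(-λ t^α)] = -λ t^{α-1} E_{α,α}(-λ t^α)`. -/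
theorem deriv_mittagLeffler_one (α lam t : ℝ) (hα : 0 < α) (hlam : 0 < lam) (ht : 0 < t) :
    HasDerivAt (fun s : ℝ => mittagLeffler α 1 (-lam * s ^ α))
      (-lam * t ^ (α - 1) * mittagLeffler α α (-lam * t ^ α)) t := by
  have ht2 : 0 < t / 2 := by linarith
  have htS : t ∈ Set.Ioo (t / 2) (2 * t) := ⟨by linarith, by linarith⟩
  set C : ℝ := lam * (2 * t) ^ α with hCdef
  have hCpos : 0 < C := by positivity
  set g : ℕ → ℝ → ℝ :=
    fun n s => (-lam) ^ n * s ^ (α * n) / Real.Gamma (α * n + 1) with hgdef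
  set G : ℕ → ℝ → ℝ :=
    fun n y => (-lam) ^ n * (α * n * y ^ (α * n - 1)) / Real.Gamma (α * n + 1) with hGdef
  set u : ℕ → ℝ :=
    fun n => (2 / t * α) * (((n : ℝ) + 1) * C ^ n / Real.Gamma (α * n + 1)) with hudef
  have hu_sum : Summable u := (ml_summable hα hCpos).mul_left _
  have hΓpos : ∀ n : ℕ, 0 < Real.Gamma (α * n + 1) := fun n =>
    Real.Gamma_pos_of_pos (by positivity)
  have hderiv : ∀ (n : ℕ) (y : ℝ), y ∈ Set.Ioo (t / 2) (2 * t) → HasDerivAt (g n) (G n y) y := by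
    intro n y hy
    have hy0 : 0 < y := lt_trans ht2 hy.1
    exact ((Real.hasDerivAt_rpow_const (p := α * n) (Or.inl hy0.ne')).const_mul
      ((-lam) ^ n)).div_const _
  have hbound : ∀ (n : ℕ) (y : ℝ), y ∈ Set.Ioo (t / 2) (2 * t) → ‖G n y‖ ≤ u n := by
    intro n y hy
    have hy0 : 0 < y := lt_trans ht2 hy.1
    have h2t : (0:ℝ) < 2 * t := by linarith
    have hyB : y ^ (α * (n:ℝ)) ≤ (2 * t) ^ (α * (n:ℝ)) :=
      Real.rpow_le_rpow hy0.le hy.2.le (by positivity)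
    have hyinv : y⁻¹ ≤ 2 / t := by
      have : y⁻¹ ≤ (t / 2)⁻¹ := inv_anti₀ ht2 hy.1.le
      calc y⁻¹ ≤ (t / 2)⁻¹ := this
        _ = 2 / t := by field_simp
    have h2tn : (2 * t) ^ (α * (n:ℝ)) = ((2 * t) ^ α) ^ n := by
      rw [Real.rpow_mul h2t.le, Real.rpow_natCast]
    have hnorm : ‖G n y‖ = lam ^ n * (α * n * y ^ (α * (n:ℝ) - 1)) / Real.Gamma (α * n + 1) := by
      rw [hGdef]
      rw [Real.norm_eq_abs, abs_div, abs_of_pos (hΓpos n), abs_mul, abs_pow, abs_neg,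
        abs_of_pos hlam, abs_of_nonneg (by positivity)]
    rw [hnorm]
    calc lam ^ n * (α * n * y ^ (α * (n:ℝ) - 1)) / Real.Gamma (α * n + 1)
        ≤ lam ^ n * (α * ((n:ℝ) + 1) * ((2 * t) ^ (α * (n:ℝ)) * (2 / t))) /
            Real.Gamma (α * n + 1) := by
          rw [Real.rpow_sub hy0, Real.rpow_one, div_eq_mul_inv (y ^ (α * (n:ℝ)))]
          gcongr
          all_goals first
            | exact hyB
            | exact hyinv
            | positivity
            | linarith [Nat.cast_nonneg (α := ℝ) n]
      _ = u n := by
          rw [hudef, hCdef]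
          simp only
          rw [mul_pow, ← h2tn]
          ring
  have hg0 : Summable (fun n => g n t) := by
    have hC' : 0 < lam * t ^ α := by positivity
    apply Summable.of_norm_bounded (ml_summable hα hC')
    intro n
    have htn : t ^ (α * (n:ℝ)) = (t ^ α) ^ n := by
      rw [Real.rpow_mul ht.le, Real.rpow_natCast]
    rw [hgdef]
    simp only
    rw [Real.norm_eq_abs, abs_div, abs_of_pos (hΓpos n), abs_mul, abs_pow, abs_neg,
      abs_of_pos hlam, abs_of_pos (Real.rpow_pos_of_pos ht _)]
    rw [htn, ← mul_pow]
    rw [div_le_div_iff₀ (hΓpos n) (hΓpos n)]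
    have h1n : (1:ℝ) ≤ (n:ℝ) + 1 := by linarith [Nat.cast_nonneg (α := ℝ) n]
    nlinarith [mul_nonneg (mul_nonneg (Nat.cast_nonneg (α := ℝ) n)
      (pow_pos hC' n).le) (hΓpos n).le]
  have key : HasDerivAt (fun z => ∑' n, g n z) (∑' n, G n t) t :=
    hasDerivAt_tsum_of_isPreconnected hu_sum isOpen_Ioo isPreconnected_Ioo
      hderiv hbound htS hg0 htS
  have heq : (fun s : ℝ => mittagLeffler α 1 (-lam * s ^ α)) =ᶠ[nhds t] (fun z => ∑' n, g n z) := by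
    filter_upwards [Ioo_mem_nhds htS.1 htS.2] with s hs
    have hs0 : 0 < s := lt_trans ht2 hs.1
    rw [mittagLeffler]
    apply tsum_congr
    intro n
    rw [hgdef]
    simp only
    rw [mul_pow, ← Real.rpow_natCast (s ^ α) n, ← Real.rpow_mul hs0.le]
  have hGsum : Summable (fun n => G n t) :=
    Summable.of_norm_bounded hu_sum (fun n => hbound n t htS)
  have hval : ∑' n, G n t = -lam * t ^ (α - 1) * mittagLeffler α α (-lam * t ^ α) := by
    rw [Summable.tsum_eq_zero_add hGsum]
    have hG0 : G 0 t = 0 := by rw [hGdef]; simp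
    rw [hG0, zero_add]
    have hterm : ∀ m : ℕ, G (m + 1) t =
        (-lam * t ^ (α - 1)) * ((-lam * t ^ α) ^ m / Real.Gamma (α * m + α)) := by
      intro m
      rw [hGdef]
      simp only
      have hc : (((m + 1 : ℕ)) : ℝ) = (m : ℝ) + 1 := by push_cast; ring
      rw [hc]
      have hKpos : 0 < α * ((m:ℝ) + 1) := by positivity
      have hΓrec : Real.Gamma (α * ((m:ℝ) + 1) + 1) =
          α * ((m:ℝ) + 1) * Real.Gamma (α * ((m:ℝ) + 1)) :=
        Real.Gamma_add_one hKpos.ne'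
      have hexp1 : α * ((m:ℝ) + 1) - 1 = (α - 1) + α * m := by ring
      have hexp2 : α * ((m:ℝ) + 1) = α * m + α := by ring
      rw [hΓrec, hexp1, Real.rpow_add ht, hexp2]
      have htm : t ^ (α * (m:ℝ)) = (t ^ α) ^ m := by
        rw [Real.rpow_mul ht.le, Real.rpow_natCast]
      rw [mul_pow (-lam), htm, pow_succ]
      have hΓm : Real.Gamma (α * m + α) ≠ 0 :=
        (Real.Gamma_pos_of_pos (by positivity)).ne'
      field_simp
    rw [tsum_congr hterm, tsum_mul_left, mittagLeffler]
  rw [← hval]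
  exact key.congr_of_eventuallyEq heq
end

section
/- For α > 0, λ > 0, and t > 0, the derivative with respect to t of t·E_{α,2}(-λ t^α) equals E_{α,1}(-λ t^α). -/
open Real in
lemma summable_ml (α r : ℝ) (hα : 0 < α) (hr : 0 ≤ r) :
    Summable fun n : ℕ => r ^ n / Real.Gamma (α * n + 1) := by
  set R : ℝ := max (r ^ (1/α)) 1 with hR
  have hR1 : 1 ≤ R := le_max_right _ _
  have hR0 : 0 < R := lt_of_lt_of_le one_pos hR1
  have hrR : r ≤ R ^ α := by
    calc r = (r ^ (1/α)) ^ α := by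
          rw [← rpow_mul hr, one_div_mul_cancel hα.ne', rpow_one]
        _ ≤ R ^ α := Real.rpow_le_rpow (Real.rpow_nonneg hr _) (le_max_left _ _) hα.le
  have hsum2R : Summable fun k : ℕ => (2*R) ^ k / (Nat.factorial k : ℝ) :=
    Real.summable_pow_div_factorial (2*R)
  set C : ℝ := ∑' k : ℕ, (2*R) ^ k / (Nat.factorial k : ℝ) with hC
  have hCle : ∀ k : ℕ, (2*R) ^ k / (Nat.factorial k : ℝ) ≤ C := fun k =>
    Summable.le_tsum hsum2R k (fun j _ => by positivity)
  have hC0 : 0 ≤ C := le_trans (by positivity) (hCle 0)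
  set q : ℝ := (1/2 : ℝ) ^ α with hq
  have hq0 : 0 < q := rpow_pos_of_pos (by norm_num) _
  have hq1 : q < 1 := rpow_lt_one (by norm_num) (by norm_num) hα
  have hgeo : Summable fun n : ℕ => q ^ n :=
    summable_geometric_of_lt_one hq0.le hq1
  refine summable_of_isBigO_nat hgeo (Asymptotics.IsBigO.of_bound (2 * R * C) ?_)
  have hev : ∀ᶠ n : ℕ in Filter.atTop, 1 ≤ α * n := by
    filter_upwards [Filter.eventually_ge_atTop ⌈1/α⌉₊] with n hn
    have : (1:ℝ)/α ≤ n := le_trans (Nat.le_ceil _) (Nat.cast_le.mpr hn)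
    calc (1:ℝ) = α * (1/α) := by field_simp
      _ ≤ α * n := by nlinarith
  filter_upwards [hev] with n hn
  set k : ℕ := ⌊α * n⌋₊ with hk
  have hk1 : 1 ≤ k := Nat.one_le_iff_ne_zero.mpr (by
    simp only [hk, ne_eq, Nat.floor_eq_zero, not_lt]; linarith)
  have hkle : (k : ℝ) ≤ α * n := Nat.floor_le (by positivity)
  have hlek : α * n < k + 1 := Nat.lt_floor_add_one _
  have hGam : (Nat.factorial k : ℝ) ≤ Real.Gamma (α * n + 1) := by
    have hk1' : (1:ℝ) ≤ (k:ℝ) := by exact_mod_cast hk1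
    have h1 : Real.Gamma ((k:ℝ) + 1) = Nat.factorial k := by
      by_cases hT : True
      · rw [← Real.Gamma_nat_eq_factorial]
      · simp at hT
    rw [← h1]
    rcases eq_or_lt_of_le (show (k:ℝ) + 1 ≤ α * n + 1 by linarith) with h | h
    · rw [h]
    · exact (Real.Gamma_strictMonoOn_Ici (Set.mem_Ici.mpr (by linarith))
        (Set.mem_Ici.mpr (by linarith)) h).le
  have hGpos : 0 < Real.Gamma (α * n + 1) := Real.Gamma_pos_of_pos (by positivity)
  have key : r ^ n / Real.Gamma (α * n + 1) ≤ 2 * R * C * q ^ n := by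
    have h1 : r ^ n ≤ R ^ (α * n) := by
      calc r ^ n ≤ (R ^ α) ^ n := pow_le_pow_left₀ hr hrR n
        _ = R ^ (α * n) := by
          rw [← Real.rpow_natCast (R ^ α) n, ← Real.rpow_mul hR0.le]
    have h2 : R ^ (α * n) ≤ R * R ^ k := by
      calc R ^ (α * n) ≤ R ^ ((k:ℝ) + 1) := rpow_le_rpow_of_exponent_le hR1 hlek.le
        _ = R * R ^ k := by
          rw [show ((k:ℝ)+1) = ((k+1 : ℕ):ℝ) by push_cast; ring, Real.rpow_natCast,
            pow_succ, mul_comm]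
    have h3 : R ^ k / (Nat.factorial k : ℝ) ≤ C * (1/2:ℝ) ^ k := by
      have : R ^ k = (2*R) ^ k * (1/2:ℝ) ^ k := by
        rw [← mul_pow]; ring_nf
      rw [this]
      have hh : (0:ℝ) ≤ (1/2:ℝ)^k := by positivity
      calc (2*R)^k * (1/2:ℝ)^k / (Nat.factorial k : ℝ)
          = ((2*R)^k / (Nat.factorial k : ℝ)) * (1/2:ℝ)^k := by ring
        _ ≤ C * (1/2:ℝ)^k := mul_le_mul_of_nonneg_right (hCle k) hh
    have h4 : ((1:ℝ)/2) ^ k ≤ 2 * q ^ n := by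
      have : ((1:ℝ)/2) ^ k = (1/2:ℝ) ^ (k:ℝ) := (Real.rpow_natCast _ _).symm
      rw [this]
      have h5 : (1/2:ℝ) ^ (k:ℝ) ≤ (1/2:ℝ) ^ (α * n - 1) :=
        Real.rpow_le_rpow_of_exponent_ge (by norm_num) (by norm_num) (by linarith)
      have h6 : (1/2:ℝ) ^ (α * n - 1) = 2 * q ^ n := by
        rw [Real.rpow_sub (by norm_num), Real.rpow_one, hq, ← Real.rpow_natCast ((1/2:ℝ)^α) n,
          ← Real.rpow_mul (by norm_num), mul_comm α (n:ℝ), Real.rpow_mul (by norm_num)]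
        ring
      linarith
    calc r ^ n / Real.Gamma (α * n + 1) ≤ r ^ n / (Nat.factorial k : ℝ) := by
          apply div_le_div_of_nonneg_left ?_ ?_ hGam <;> first | positivity | exact hGpos
          -- fallback
        _ ≤ R ^ (α*n) / (Nat.factorial k : ℝ) := by
          apply div_le_div_of_nonneg_right h1 ?_ ; positivity
        _ ≤ (R * R ^ k) / (Nat.factorial k : ℝ) := by
          apply div_le_div_of_nonneg_right h2 ?_ ; positivity
        _ = R * (R ^ k / (Nat.factorial k : ℝ)) := by ring
        _ ≤ R * (C * (1/2:ℝ)^k) := mul_le_mul_of_nonneg_left h3 hR0.le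
        _ ≤ R * (C * (2 * q ^ n)) := by
          apply mul_le_mul_of_nonneg_left (mul_le_mul_of_nonneg_left h4 hC0) hR0.le
        _ = 2 * R * C * q ^ n := by ring
  rw [Real.norm_eq_abs, Real.norm_eq_abs, abs_of_nonneg (by positivity),
    abs_of_nonneg (by positivity)]
  exact key

/-- For `α > 0`, `λ > 0`, `t > 0`:
`d/dt [t · E_{α,2}(-λ t^α)] = E_{α,1}(-λ t^α)`. -/
theorem deriv_mittagLeffler_two (α lam t : ℝ) (hα : 0 < α) (hlam : 0 < lam) (ht : 0 < t) :
    HasDerivAt (fun s : ℝ => s * mittagLeffler α 2 (-lam * s ^ α))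
      (mittagLeffler α 1 (-lam * t ^ α)) t := by
  set F : ℕ → ℝ → ℝ := fun n y => y * ((-lam * y ^ α) ^ n / Real.Gamma (α * n + 2)) with hF
  set F' : ℕ → ℝ → ℝ := fun n x => (-lam * x ^ α) ^ n / Real.Gamma (α * n + 1) with hF'
  set u : ℕ → ℝ := fun n => (lam * (t+1) ^ α) ^ n / Real.Gamma (α * n + 1) with hu_def
  have hu : Summable u := summable_ml α _ hα (by positivity)
  have hsopen : IsOpen (Set.Ioo (0:ℝ) (t+1)) := isOpen_Ioo
  have hsconn : IsPreconnected (Set.Ioo (0:ℝ) (t+1)) := (convex_Ioo _ _).isPreconnected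
  have htmem : t ∈ Set.Ioo (0:ℝ) (t+1) := ⟨ht, by linarith⟩
  -- positivity facts
  have hGpos1 : ∀ n : ℕ, 0 < Real.Gamma (α * n + 1) := fun n =>
    Real.Gamma_pos_of_pos (by positivity)
  have hGpos2 : ∀ n : ℕ, 0 < Real.Gamma (α * n + 2) := fun n =>
    Real.Gamma_pos_of_pos (by positivity)
  have hGam12 : ∀ n : ℕ, Real.Gamma (α * n + 1) ≤ Real.Gamma (α * n + 2) := by
    intro n
    have h2 : Real.Gamma (α * n + 2) = (α * n + 1) * Real.Gamma (α * n + 1) := by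
      rw [show α * (n:ℝ) + 2 = (α * n + 1) + 1 by ring,
        Real.Gamma_add_one (by positivity)]
    rw [h2]
    nlinarith [hGpos1 n, mul_nonneg (mul_nonneg hα.le (Nat.cast_nonneg n)) (hGpos1 n).le]
  -- derivatives of terms
  have hg : ∀ (n : ℕ) (x : ℝ), x ∈ Set.Ioo (0:ℝ) (t+1) → HasDerivAt (F n) (F' n x) x := by
    intro n x hx
    have hx0 : 0 < x := hx.1
    set c : ℝ := (-lam) ^ n / Real.Gamma (α * n + 2) with hc
    have hG : HasDerivAt (fun y : ℝ => c * y ^ (α * n + 1))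
        (c * ((α * n + 1) * x ^ (α * n + 1 - 1))) x :=
      (Real.hasDerivAt_rpow_const (Or.inl hx0.ne')).const_mul c
    have heq : F n =ᶠ[nhds x] fun y : ℝ => c * y ^ (α * n + 1) := by
      filter_upwards [isOpen_Ioi.mem_nhds (Set.mem_Ioi.mpr hx0)] with y hy
      have hy0 : (0:ℝ) < y := hy
      have h1 : (-lam * y ^ α) ^ n = (-lam) ^ n * y ^ (α * n) := by
        rw [mul_pow, ← Real.rpow_natCast (y ^ α) n, ← Real.rpow_mul hy0.le]
      have h2 : y ^ (α * n + 1) = y ^ (α * n) * y := by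
        rw [Real.rpow_add hy0, Real.rpow_one]
      simp only [hF, h1, hc, h2]; ring
    have hval : c * ((α * n + 1) * x ^ (α * n + 1 - 1)) = F' n x := by
      have h1 : (-lam * x ^ α) ^ n = (-lam) ^ n * x ^ (α * n) := by
        rw [mul_pow, ← Real.rpow_natCast (x ^ α) n, ← Real.rpow_mul hx0.le]
      have h2 : Real.Gamma (α * n + 2) = (α * n + 1) * Real.Gamma (α * n + 1) := by
        rw [show α * (n:ℝ) + 2 = (α * n + 1) + 1 by ring,
          Real.Gamma_add_one (by positivity)]
      have h3 : α * n + 1 - 1 = α * n := by ring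
      simp only [hF', h1, hc, h2, h3]
      field_simp
    exact hval ▸ (hG.congr_of_eventuallyEq heq)
  -- uniform bound
  have hg' : ∀ (n : ℕ) (x : ℝ), x ∈ Set.Ioo (0:ℝ) (t+1) → ‖F' n x‖ ≤ u n := by
    intro n x hx
    have hx0 : 0 < x := hx.1
    have hxle : x ^ α ≤ (t+1) ^ α :=
      Real.rpow_le_rpow hx0.le (by linarith [hx.2]) hα.le
    have hxa : 0 < x ^ α := Real.rpow_pos_of_pos hx0 _
    have : ‖F' n x‖ = (lam * x ^ α) ^ n / Real.Gamma (α * n + 1) := by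
      rw [hF', Real.norm_eq_abs, abs_div, abs_of_pos (hGpos1 n), abs_pow, abs_mul,
        abs_neg, abs_of_pos hlam, abs_of_pos hxa]
    rw [this, hu_def]
    exact (div_le_div_iff_of_pos_right (hGpos1 n)).mpr
      (pow_le_pow_left₀ (by positivity) (mul_le_mul_of_nonneg_left hxle hlam.le) n)
  -- summability at t
  have hg0 : Summable fun n => F n t := by
    apply Summable.mul_left
    apply Summable.of_norm_bounded hu
    intro n
    have hta : 0 < t ^ α := Real.rpow_pos_of_pos ht _
    have h1 : ‖(-lam * t ^ α) ^ n / Real.Gamma (α * n + 2)‖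
        = (lam * t ^ α) ^ n / Real.Gamma (α * n + 2) := by
      rw [Real.norm_eq_abs, abs_div, abs_of_pos (hGpos2 n), abs_pow, abs_mul, abs_neg,
        abs_of_pos hlam, abs_of_pos hta]
    rw [h1, hu_def]
    have htle : t ^ α ≤ (t+1) ^ α := Real.rpow_le_rpow ht.le (by linarith) hα.le
    calc (lam * t ^ α) ^ n / Real.Gamma (α * n + 2)
        ≤ (lam * t ^ α) ^ n / Real.Gamma (α * n + 1) :=
          div_le_div_of_nonneg_left (by positivity) (hGpos1 n) (hGam12 n)
      _ ≤ (lam * (t+1) ^ α) ^ n / Real.Gamma (α * n + 1) := by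
          exact (div_le_div_iff_of_pos_right (hGpos1 n)).mpr
            (pow_le_pow_left₀ (by positivity) (mul_le_mul_of_nonneg_left htle hlam.le) n)
  have H := hasDerivAt_tsum_of_isPreconnected hu hsopen hsconn hg hg' htmem hg0 htmem
  have heqf : (fun y : ℝ => ∑' n : ℕ, F n y)
      = fun s : ℝ => s * mittagLeffler α 2 (-lam * s ^ α) := by
    funext y
    rw [mittagLeffler, ← tsum_mul_left]
  have heqv : (∑' n : ℕ, F' n t) = mittagLeffler α 1 (-lam * t ^ α) := rfl
  rw [← heqf, ← heqv]
  exact H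
end

section
/- Let (Ω, Σ, μ) be a measure space with m : Ω → ℝ measurable, m ≥ m₀ > 0 a.e., 1 < α < 2, and u₀ with m^{γ̃} u₀ ∈ L²(μ) for some γ̃ ≥ 0. Assume E_{α,1} is continuous on ℝ, E_{α,1}(0) = 1, and |E_{α,1}(-x)| ≤ C for all x ≥ 0. Then for every 0 ≤ σ ≤ γ̃, ‖m^σ (E_{α,1}(-m(·) t^α) u₀ - u₀)‖_{L²(μ)} → 0 as t → 0⁺. -/
open MeasureTheory Filter
open scoped ENNReal NNReal Topology

/-- Attainment of the initial datum: `‖m^σ (E_{α,1}(-m(·)t^α)u₀ - u₀)‖_{L²} → 0`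
as `t → 0⁺`, for `0 ≤ σ ≤ γ̃` when `m^{γ̃} u₀ ∈ L²` and `m ≥ m₀ > 0` a.e. -/
theorem initial_condition_S1
    {Ω : Type*} [MeasurableSpace Ω] (μ : Measure Ω)
    (m : Ω → ℝ) (hm : Measurable m) (m₀ : ℝ) (hm₀ : 0 < m₀)
    (hlow : ∀ᵐ x ∂μ, m₀ ≤ m x)
    (α : ℝ) (hα1 : 1 < α) (hα2 : α < 2)
    (γ' : ℝ) (hγ' : 0 ≤ γ')
    (u₀ : Ω → ℝ) (hu₀ : MemLp (fun x => m x ^ γ' * u₀ x) 2 μ)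
    (hcont : Continuous (fun x : ℝ => mittagLeffler α 1 x))
    (hone : mittagLeffler α 1 0 = 1)
    (C : ℝ) (hC : 0 < C) (hbd : ∀ x : ℝ, 0 ≤ x → |mittagLeffler α 1 (-x)| ≤ C)
    (σ : ℝ) (hσ0 : 0 ≤ σ) (hσγ : σ ≤ γ') :
    Tendsto
      (fun t : ℝ =>
        (eLpNorm
            (fun x => m x ^ σ * (mittagLeffler α 1 (-(m x) * t ^ α) * u₀ x - u₀ x)) 2
            μ).toReal)
      (nhdsWithin 0 (Set.Ioi 0)) (nhds 0) := by
  set l := nhdsWithin (0:ℝ) (Set.Ioi 0) with hl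
  -- measurable representative
  obtain ⟨w, hw_sm, hw_eq⟩ := hu₀.1
  have hw_meas : Measurable w := hw_sm.measurable
  set v : Ω → ℝ := fun x => w x / m x ^ γ' with hv
  have hv_meas : Measurable v := hw_meas.div (hm.pow measurable_const)
  have key : ∀ᵐ x ∂μ, m₀ ≤ m x ∧ v x = u₀ x ∧ m x ^ γ' * u₀ x = w x := by
    filter_upwards [hlow, hw_eq] with x h1 h2
    have hmx : 0 < m x := lt_of_lt_of_le hm₀ h1
    have hpow : 0 < m x ^ γ' := Real.rpow_pos_of_pos hmx γ'
    refine ⟨h1, ?_, h2⟩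
    rw [hv]
    simp only [← h2, mul_div_cancel_left₀ _ hpow.ne']
  -- the functions with the measurable representative
  set G : ℝ → Ω → ℝ≥0∞ := fun t x =>
    (‖m x ^ σ * (mittagLeffler α 1 (-(m x) * t ^ α) * v x - v x)‖₊ : ℝ≥0∞) ^ (2:ℝ) with hG
  have hG_meas : ∀ t : ℝ, Measurable (G t) := by
    intro t
    apply (ENNReal.continuous_rpow_const.measurable).comp
    apply Measurable.coe_nnreal_ennreal
    apply Measurable.nnnorm
    exact (hm.pow measurable_const).mul
      (((hcont.measurable.comp ((hm.neg).mul measurable_const)).mul hv_meas).sub hv_meas)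
  set c : ℝ := (C + 1) * m₀ ^ (σ - γ') with hc
  have hc_pos : 0 < c := mul_pos (by linarith) (Real.rpow_pos_of_pos hm₀ _)
  set bound : Ω → ℝ≥0∞ := fun x => (‖c * w x‖₊ : ℝ≥0∞) ^ (2:ℝ) with hbound
  -- finiteness of the dominating integral
  have hw2 : ∫⁻ x, (‖w x‖₊ : ℝ≥0∞) ^ (2:ℝ) ∂μ ≠ ∞ := by
    have h1 : eLpNorm (fun x => m x ^ γ' * u₀ x) 2 μ < ∞ := hu₀.2
    rw [eLpNorm_eq_lintegral_rpow_enorm_toReal two_ne_zero ENNReal.ofNat_ne_top] at h1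
    simp only [ENNReal.toReal_ofNat] at h1
    rw [ENNReal.rpow_lt_top_iff_of_pos (by norm_num)] at h1
    have h2 : ∫⁻ x, (‖w x‖₊ : ℝ≥0∞) ^ (2:ℝ) ∂μ
        = ∫⁻ x, (‖m x ^ γ' * u₀ x‖₊ : ℝ≥0∞) ^ (2:ℝ) ∂μ := by
      refine lintegral_congr_ae ?_
      filter_upwards [hw_eq] with x hx
      rw [hx]
    rw [h2]
    exact h1.ne
  have hfin : ∫⁻ x, bound x ∂μ ≠ ∞ := by
    have : ∀ x, bound x = (‖c‖₊ : ℝ≥0∞) ^ (2:ℝ) * (‖w x‖₊ : ℝ≥0∞) ^ (2:ℝ) := by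
      intro x
      rw [hbound]
      simp only [nnnorm_mul, ENNReal.coe_mul]
      rw [ENNReal.mul_rpow_of_nonneg _ _ (by norm_num)]
    simp only [this]
    have hmeasw : Measurable (fun x => (‖w x‖₊ : ℝ≥0∞) ^ (2:ℝ)) :=
      hw_meas.nnnorm.coe_nnreal_ennreal.pow_const _
    rw [lintegral_const_mul _ hmeasw]
    exact ENNReal.mul_ne_top (ENNReal.rpow_ne_top_of_nonneg (by norm_num) ENNReal.coe_ne_top) hw2
  -- dominated convergence for the G's
  have hB : Tendsto (fun t => ∫⁻ x, G t x ∂μ) l (𝓝 0) := by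
    have h0 : (0:ℝ≥0∞) = ∫⁻ _ : Ω, (0:ℝ≥0∞) ∂μ := by simp
    rw [h0]
    refine tendsto_lintegral_filter_of_dominated_convergence bound
      (Eventually.of_forall hG_meas) ?_ hfin ?_
    · -- bound
      filter_upwards [self_mem_nhdsWithin] with t ht
      filter_upwards [key] with x hx
      obtain ⟨h1, h2, h3⟩ := hx
      have hmx : 0 < m x := lt_of_lt_of_le hm₀ h1
      have htpos : (0:ℝ) < t := ht
      have harg : (0:ℝ) ≤ m x * t ^ α := mul_nonneg hmx.le (Real.rpow_nonneg htpos.le α)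
      have hE : |mittagLeffler α 1 (-(m x) * t ^ α)| ≤ C := by
        rw [neg_mul]
        exact hbd _ harg
      have habs : |m x ^ σ * (mittagLeffler α 1 (-(m x) * t ^ α) * v x - v x)|
          ≤ |c * w x| := by
        have step1 : |mittagLeffler α 1 (-(m x) * t ^ α) * v x - v x|
            = |mittagLeffler α 1 (-(m x) * t ^ α) - 1| * |v x| := by
          rw [← abs_mul]; ring_nf
        have step2 : |mittagLeffler α 1 (-(m x) * t ^ α) - 1| ≤ C + 1 := by
          calc |mittagLeffler α 1 (-(m x) * t ^ α) - 1|
              ≤ |mittagLeffler α 1 (-(m x) * t ^ α)| + 1 := by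
                have := abs_sub_abs_le_abs_sub (mittagLeffler α 1 (-(m x) * t ^ α)) 1
                have h := abs_sub (mittagLeffler α 1 (-(m x) * t ^ α)) 1
                calc |mittagLeffler α 1 (-(m x) * t ^ α) - 1|
                    ≤ |mittagLeffler α 1 (-(m x) * t ^ α)| + |(1:ℝ)| := abs_sub _ _
                  _ = |mittagLeffler α 1 (-(m x) * t ^ α)| + 1 := by rw [abs_one]
            _ ≤ C + 1 := by linarith
        have hmσ : m x ^ σ ≤ m₀ ^ (σ - γ') * m x ^ γ' := by
          have e1 : m x ^ σ = m x ^ (σ - γ') * m x ^ γ' := by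
            rw [← Real.rpow_add hmx]; ring_nf
          rw [e1]
          have e2 : m x ^ (σ - γ') ≤ m₀ ^ (σ - γ') :=
            Real.rpow_le_rpow_of_nonpos hm₀ h1 (sub_nonpos.mpr hσγ)
          exact mul_le_mul_of_nonneg_right e2 (Real.rpow_pos_of_pos hmx γ').le
        have hmσ0 : 0 ≤ m x ^ σ := (Real.rpow_pos_of_pos hmx σ).le
        calc |m x ^ σ * (mittagLeffler α 1 (-(m x) * t ^ α) * v x - v x)|
            = m x ^ σ * (|mittagLeffler α 1 (-(m x) * t ^ α) - 1| * |v x|) := by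
              rw [abs_mul, abs_of_nonneg hmσ0, step1]
          _ ≤ (m₀ ^ (σ - γ') * m x ^ γ') * ((C + 1) * |v x|) := by
              apply mul_le_mul hmσ
              · exact mul_le_mul_of_nonneg_right step2 (abs_nonneg _)
              · positivity
              · positivity
          _ = c * (m x ^ γ' * |v x|) := by rw [hc]; ring
          _ = c * |m x ^ γ' * v x| := by
              rw [abs_mul, abs_of_nonneg (Real.rpow_pos_of_pos hmx γ').le]
          _ = c * |w x| := by rw [h2, h3]
          _ = |c * w x| := by rw [abs_mul, abs_of_pos hc_pos]
      rw [hG, hbound]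
      refine ENNReal.rpow_le_rpow ?_ (by norm_num)
      rw [ENNReal.coe_le_coe, ← NNReal.coe_le_coe, coe_nnnorm, coe_nnnorm,
        Real.norm_eq_abs, Real.norm_eq_abs]
      exact habs
    · -- pointwise limit
      filter_upwards [hlow] with x h1
      have hmx : 0 < m x := lt_of_lt_of_le hm₀ h1
      have hα0 : (0:ℝ) < α := by linarith
      have ht1 : Tendsto (fun t : ℝ => t ^ α) l (𝓝 0) := by
        have hcnt : ContinuousAt (fun t : ℝ => t ^ α) 0 :=
          Real.continuousAt_rpow_const 0 α (Or.inr hα0.le)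
        have := hcnt.tendsto.mono_left (nhdsWithin_le_nhds (s := Set.Ioi (0:ℝ)))
        rwa [Real.zero_rpow hα0.ne'] at this
      have ht2 : Tendsto (fun t : ℝ => -(m x) * t ^ α) l (𝓝 0) := by
        have := ht1.const_mul (-(m x))
        rwa [mul_zero] at this
      have ht3 : Tendsto (fun t : ℝ => mittagLeffler α 1 (-(m x) * t ^ α)) l (𝓝 1) := by
        have := (hcont.tendsto 0).comp ht2
        rwa [hone] at this
      have ht4 : Tendsto
          (fun t : ℝ => m x ^ σ * (mittagLeffler α 1 (-(m x) * t ^ α) * v x - v x)) l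
          (𝓝 0) := by
        have : Tendsto
            (fun t : ℝ => m x ^ σ * (mittagLeffler α 1 (-(m x) * t ^ α) * v x - v x)) l
            (𝓝 (m x ^ σ * ((1:ℝ) * v x - v x))) :=
          (((ht3.mul_const (v x)).sub_const (v x)).const_mul (m x ^ σ))
        simpa using this
      have ht5 : Tendsto (fun t => G t x) l (𝓝 0) := by
        have h5 : Tendsto (fun t : ℝ =>
            (‖m x ^ σ * (mittagLeffler α 1 (-(m x) * t ^ α) * v x - v x)‖₊ : ℝ≥0∞)) l
            (𝓝 0) := by
          have := (continuous_nnnorm.tendsto (0:ℝ)).comp ht4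
          rw [nnnorm_zero] at this
          exact (ENNReal.tendsto_coe.mpr this).congr (fun t => rfl) |>.mono_right
            (by rw [ENNReal.coe_zero])
        have h6 := (ENNReal.continuous_rpow_const (y := (2:ℝ))).tendsto 0 |>.comp h5
        rw [hG]
        simpa [Function.comp_def, ENNReal.zero_rpow_of_pos (show (0:ℝ) < 2 by norm_num)] using h6
      exact ht5
  -- transfer back from v to u₀ and from lintegral to eLpNorm.toReal
  have hBu : Tendsto (fun t => ∫⁻ x,
      (‖m x ^ σ * (mittagLeffler α 1 (-(m x) * t ^ α) * u₀ x - u₀ x)‖₊ : ℝ≥0∞) ^ (2:ℝ) ∂μ)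
      l (𝓝 0) := by
    refine hB.congr (fun t => ?_)
    refine lintegral_congr_ae ?_
    filter_upwards [key] with x hx
    show (‖m x ^ σ * (mittagLeffler α 1 (-(m x) * t ^ α) * v x - v x)‖₊ : ℝ≥0∞) ^ (2:ℝ) = _
    rw [hx.2.1]
  have hBr : Tendsto (fun t => (∫⁻ x,
      (‖m x ^ σ * (mittagLeffler α 1 (-(m x) * t ^ α) * u₀ x - u₀ x)‖₊ : ℝ≥0∞) ^ (2:ℝ) ∂μ).toReal)
      l (𝓝 0) := by
    have := (ENNReal.tendsto_toReal (by simp : (0:ℝ≥0∞) ≠ ∞)).comp hBu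
    simpa [Function.comp_def] using this
  have hfinal := ((Real.continuousAt_rpow_const 0 (1/2) (Or.inr (by norm_num))).tendsto).comp hBr
  rw [Real.zero_rpow (by norm_num : (1:ℝ)/2 ≠ 0)] at hfinal
  refine hfinal.congr (fun t => ?_)
  rw [Function.comp_apply, eLpNorm_eq_lintegral_rpow_enorm_toReal two_ne_zero ENNReal.ofNat_ne_top]
  simp only [ENNReal.toReal_ofNat]
  rw [← ENNReal.toReal_rpow]
  rfl
end
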